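/- For every x with 0 < x < 1/2, writing q = Φ̄^{−1}(x), one has log(q²/(q²+1)) ≤ q²/2 − log(1/x) + log(√(2π)·q) ≤ 0. -/

import Mathlib

open Real

/-- Standard normal density. -/
noncomputable def gphi (t : ℝ) : ℝ := (Real.sqrt (2 * Real.pi))⁻¹ * Real.exp (-(t ^ 2) / 2)

/-- Standard normal upper-tail (survival) function. -/
noncomputable def Phibar (t : ℝ) : ℝ := ∫ s in Set.Ioi t, gphi s

/-- Inverse of the standard normal upper-tail function. -/
noncomputable def PhibarInv (x : ℝ) : ℝ := Function.invFun Phibar x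

namespace GaussianQuantileAux

open MeasureTheory Set Filter

lemma sqrt2pi_pos : 0 < Real.sqrt (2 * Real.pi) := Real.sqrt_pos.2 (by positivity)

lemma gphi_pos (t : ℝ) : 0 < gphi t := by
  unfold gphi; positivity

lemma gphi_eq : gphi = fun t => (Real.sqrt (2 * Real.pi))⁻¹ * Real.exp (-(1/2) * t ^ 2) := by
  funext t; unfold gphi; ring_nf

lemma integrable_exp_half : Integrable (fun t : ℝ => Real.exp (-(t ^ 2) / 2)) := by
  have h := integrable_exp_neg_mul_sq (by norm_num : (0:ℝ) < 1/2)
  convert h using 2 with t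
  ring_nf

lemma integrable_gphi : Integrable gphi := by
  unfold gphi
  exact integrable_exp_half.const_mul _

lemma integral_gphi : ∫ t, gphi t = 1 := by
  rw [gphi_eq]
  rw [integral_const_mul]
  have : ∫ t : ℝ, Real.exp (-(1/2) * t ^ 2) = Real.sqrt (Real.pi / (1/2)) :=
    integral_gaussian (1/2)
  rw [this]
  rw [show Real.pi / (1/2) = 2 * Real.pi by ring]
  exact inv_mul_cancel₀ (ne_of_gt sqrt2pi_pos)

lemma Phibar_zero : Phibar 0 = 1 / 2 := by
  have h : ∫ t : ℝ, gphi |t| = 2 * ∫ t in Set.Ioi (0:ℝ), gphi t := integral_comp_abs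
  have h2 : ∀ t : ℝ, gphi |t| = gphi t := by
    intro t; unfold gphi; rw [sq_abs]
  simp_rw [h2] at h
  rw [integral_gphi] at h
  unfold Phibar
  linarith

lemma Phibar_strictAnti : StrictAnti Phibar := by
  intro a b hab
  have hsplit : Phibar a = (∫ t in Set.Ioc a b, gphi t) + Phibar b := by
    unfold Phibar
    rw [← setIntegral_union (Set.Ioc_disjoint_Ioi le_rfl) measurableSet_Ioi
      integrable_gphi.integrableOn integrable_gphi.integrableOn,
      Set.Ioc_union_Ioi_eq_Ioi hab.le]
  have hpos : 0 < ∫ t in Set.Ioc a b, gphi t := by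
    rw [← intervalIntegral.integral_of_le hab.le]
    exact intervalIntegral.intervalIntegral_pos_of_pos
      (integrable_gphi.intervalIntegrable) gphi_pos hab
  linarith

lemma continuous_Phibar : Continuous Phibar := by
  have key : ∀ t : ℝ, Phibar t = Phibar 0 - ∫ x in (0:ℝ)..t, gphi x := by
    intro t
    rcases le_total 0 t with h | h
    · have : Phibar 0 = (∫ x in Set.Ioc 0 t, gphi x) + Phibar t := by
        unfold Phibar
        rw [← setIntegral_union (Set.Ioc_disjoint_Ioi le_rfl) measurableSet_Ioi
          integrable_gphi.integrableOn integrable_gphi.integrableOn,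
          Set.Ioc_union_Ioi_eq_Ioi h]
      rw [intervalIntegral.integral_of_le h]
      linarith
    · have : Phibar t = (∫ x in Set.Ioc t 0, gphi x) + Phibar 0 := by
        unfold Phibar
        rw [← setIntegral_union (Set.Ioc_disjoint_Ioi le_rfl) measurableSet_Ioi
          integrable_gphi.integrableOn integrable_gphi.integrableOn,
          Set.Ioc_union_Ioi_eq_Ioi h]
      rw [intervalIntegral.integral_symm, intervalIntegral.integral_of_le h]
      linarith
  have : Phibar = fun t => Phibar 0 - ∫ x in (0:ℝ)..t, gphi x := funext key
  rw [this]
  exact continuous_const.sub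
    (intervalIntegral.continuous_primitive (fun a b => integrable_gphi.intervalIntegrable) 0)

lemma integral_tail_exp (q : ℝ) :
    ∫ t in Set.Ioi q, t * Real.exp (-(t ^ 2) / 2) = Real.exp (-(q ^ 2) / 2) := by
  have hderiv : ∀ t ∈ Set.Ici q, HasDerivAt (fun t : ℝ => -Real.exp (-(t ^ 2) / 2))
      (t * Real.exp (-(t ^ 2) / 2)) t := by
    intro t _
    have h1 : HasDerivAt (fun t : ℝ => -(t ^ 2) / 2) (-t) t := by
      have := (hasDerivAt_pow 2 t).neg.div_const 2
      refine this.congr_deriv ?_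
      simp; ring
    have := (h1.exp).neg
    refine this.congr_deriv ?_
    ring
  have hint : IntegrableOn (fun t : ℝ => t * Real.exp (-(t ^ 2) / 2)) (Set.Ioi q) := by
    have : Integrable (fun t : ℝ => t * Real.exp (-(1/2) * t ^ 2)) := by
      have := integrable_mul_exp_neg_mul_sq (by norm_num : (0:ℝ) < 1/2)
      convert this using 2
    have h2 : Integrable (fun t : ℝ => t * Real.exp (-(t ^ 2) / 2)) := by
      convert this using 2 with t; ring_nf
    exact h2.integrableOn
  have htend : Tendsto (fun t : ℝ => -Real.exp (-(t ^ 2) / 2)) atTop (nhds 0) := by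
    rw [← neg_zero]
    refine Tendsto.neg ?_
    refine Real.tendsto_exp_atBot.comp ?_
    apply Filter.Tendsto.atBot_div_const (by norm_num : (0:ℝ) < 2)
    exact tendsto_neg_atBot_iff.2 (tendsto_pow_atTop (by norm_num))
  have := MeasureTheory.integral_Ioi_of_hasDerivAt_of_tendsto'
    hderiv hint htend
  rw [this]; ring

lemma tail_exp_upper (q : ℝ) (hq : 0 < q) :
    ∫ t in Set.Ioi q, Real.exp (-(t ^ 2) / 2) ≤ Real.exp (-(q ^ 2) / 2) / q := by
  have hti : Integrable (fun t : ℝ => t * Real.exp (-(t ^ 2) / 2)) := by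
    have := integrable_mul_exp_neg_mul_sq (by norm_num : (0:ℝ) < 1/2)
    convert this using 2 with t; ring_nf
  have hmono : ∫ t in Set.Ioi q, Real.exp (-(t ^ 2) / 2)
      ≤ ∫ t in Set.Ioi q, q⁻¹ * (t * Real.exp (-(t ^ 2) / 2)) := by
    apply setIntegral_mono_on integrable_exp_half.integrableOn
      ((hti.integrableOn).const_mul q⁻¹) measurableSet_Ioi
    intro t ht
    have htq : q ≤ t := le_of_lt ht
    rw [← mul_assoc]
    have h1 : (1:ℝ) ≤ q⁻¹ * t := by
      rw [← div_eq_inv_mul]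
      exact (le_div_iff₀ hq).2 (by simpa using htq)
    nlinarith [Real.exp_pos (-(t ^ 2) / 2)]
  rw [integral_const_mul, integral_tail_exp q] at hmono
  rw [div_eq_inv_mul]; exact hmono

lemma tail_exp_lower (q : ℝ) :
    q / (q ^ 2 + 1) * Real.exp (-(q ^ 2) / 2) ≤ ∫ t in Set.Ioi q, Real.exp (-(t ^ 2) / 2) := by
  set F : ℝ → ℝ := fun t => t / (t ^ 2 + 1) * Real.exp (-(t ^ 2) / 2) with hF
  set f' : ℝ → ℝ := fun t =>
    ((1 - t ^ 2) / (t ^ 2 + 1) ^ 2 - t ^ 2 / (t ^ 2 + 1)) * Real.exp (-(t ^ 2) / 2) with hf'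
  have hden : ∀ t : ℝ, (0:ℝ) < t ^ 2 + 1 := fun t => by positivity
  have hderiv : ∀ t ∈ Set.Ici q, HasDerivAt F (f' t) t := by
    intro t _
    have h1 : HasDerivAt (fun t : ℝ => t / (t ^ 2 + 1))
        ((1 * (t ^ 2 + 1) - t * (2 * t)) / (t ^ 2 + 1) ^ 2) t := by
      have hd : HasDerivAt (fun t : ℝ => t ^ 2 + 1) (2 * t) t := by
        simpa using ((hasDerivAt_pow 2 t).add_const 1)
      exact (hasDerivAt_id t).div hd (ne_of_gt (hden t))
    have h2 : HasDerivAt (fun t : ℝ => Real.exp (-(t ^ 2) / 2))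
        (-t * Real.exp (-(t ^ 2) / 2)) t := by
      have h0 : HasDerivAt (fun t : ℝ => -(t ^ 2) / 2) (-t) t := by
        have := (hasDerivAt_pow 2 t).neg.div_const 2
        refine this.congr_deriv ?_; simp; ring
      have := h0.exp
      refine this.congr_deriv ?_; ring
    have := h1.mul h2
    refine this.congr_deriv ?_
    rw [hf']
    field_simp
    ring
  have hkey : ∀ t : ℝ, (1 - t ^ 2) / (t ^ 2 + 1) ^ 2 - t ^ 2 / (t ^ 2 + 1)
      = (1 - 2 * t ^ 2 - t ^ 4) / (t ^ 2 + 1) ^ 2 := by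
    intro t
    field_simp
    ring
  have hbound : ∀ t : ℝ, |f' t| ≤ Real.exp (-(t ^ 2) / 2) := by
    intro t
    rw [hf', abs_mul, abs_of_pos (Real.exp_pos _), hkey t]
    have h1 : |(1 - 2 * t ^ 2 - t ^ 4) / (t ^ 2 + 1) ^ 2| ≤ 1 := by
      rw [abs_div, abs_of_pos (by positivity : (0:ℝ) < (t ^ 2 + 1) ^ 2),
        div_le_one (by positivity)]
      rw [abs_le]
      constructor <;> nlinarith [sq_nonneg t, sq_nonneg (t ^ 2)]
    nlinarith [Real.exp_pos (-(t ^ 2) / 2),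
      abs_nonneg ((1 - 2 * t ^ 2 - t ^ 4) / (t ^ 2 + 1) ^ 2)]
  have hcont : Continuous f' := by
    rw [hf']; fun_prop (disch := intro t; positivity)
  have hint : IntegrableOn f' (Set.Ioi q) := by
    apply Integrable.mono (integrable_exp_half.integrableOn)
      hcont.aestronglyMeasurable.restrict
    filter_upwards with t
    rw [Real.norm_eq_abs, Real.norm_eq_abs, abs_of_pos (Real.exp_pos _)]
    exact hbound t
  have hexp0 : Tendsto (fun t : ℝ => Real.exp (-(t ^ 2) / 2)) atTop (nhds 0) := by
    refine Real.tendsto_exp_atBot.comp ?_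
    apply Filter.Tendsto.atBot_div_const (by norm_num : (0:ℝ) < 2)
    exact tendsto_neg_atBot_iff.2 (tendsto_pow_atTop (by norm_num))
  have htend : Tendsto F atTop (nhds 0) := by
    apply squeeze_zero_norm _ hexp0
    intro t
    rw [hF, Real.norm_eq_abs, abs_mul, abs_of_pos (Real.exp_pos _), abs_div,
      abs_of_pos (hden t)]
    have h2 : |t| / (t ^ 2 + 1) ≤ 1 := by
      rw [div_le_one (hden t)]
      nlinarith [sq_abs t, abs_nonneg t]
    nlinarith [Real.exp_pos (-(t ^ 2) / 2), abs_nonneg t,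
      div_nonneg (abs_nonneg t) (hden t).le]
  have hFTC : ∫ t in Set.Ioi q, f' t = 0 - F q :=
    MeasureTheory.integral_Ioi_of_hasDerivAt_of_tendsto' hderiv hint htend
  have hmono : ∫ t in Set.Ioi q, (- f' t) ≤ ∫ t in Set.Ioi q, Real.exp (-(t ^ 2) / 2) := by
    apply setIntegral_mono_on hint.neg integrable_exp_half.integrableOn measurableSet_Ioi
    intro t _
    calc -f' t ≤ |f' t| := neg_le_abs _
    _ ≤ _ := hbound t
  rw [integral_neg, hFTC] at hmono
  simp only [hF] at hmono
  linarith

lemma Phibar_eq (q : ℝ) :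
    Phibar q = (Real.sqrt (2 * Real.pi))⁻¹ * ∫ t in Set.Ioi q, Real.exp (-(t ^ 2) / 2) := by
  unfold Phibar gphi
  rw [integral_const_mul]

lemma Phibar_le_gphi_div (q : ℝ) (hq : 0 < q) : Phibar q ≤ gphi q / q := by
  rw [Phibar_eq]
  have h := tail_exp_upper q hq
  have hc : (0:ℝ) ≤ (Real.sqrt (2 * Real.pi))⁻¹ := by positivity
  calc (Real.sqrt (2 * Real.pi))⁻¹ * ∫ t in Set.Ioi q, Real.exp (-(t ^ 2) / 2)
      ≤ (Real.sqrt (2 * Real.pi))⁻¹ * (Real.exp (-(q ^ 2) / 2) / q) :=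
        mul_le_mul_of_nonneg_left h hc
    _ = gphi q / q := by unfold gphi; ring

lemma gphi_mul_le_Phibar (q : ℝ) : q / (q ^ 2 + 1) * gphi q ≤ Phibar q := by
  rw [Phibar_eq]
  have h := tail_exp_lower q
  have hc : (0:ℝ) ≤ (Real.sqrt (2 * Real.pi))⁻¹ := by positivity
  calc q / (q ^ 2 + 1) * gphi q
      = (Real.sqrt (2 * Real.pi))⁻¹ * (q / (q ^ 2 + 1) * Real.exp (-(q ^ 2) / 2)) := by
        unfold gphi; ring
    _ ≤ _ := mul_le_mul_of_nonneg_left h hc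

lemma exists_Phibar_eq (x : ℝ) (hx0 : 0 < x) (hx : x < 1 / 2) : ∃ q, Phibar q = x := by
  set c : ℝ := (Real.sqrt (2 * Real.pi))⁻¹ with hc
  have hcpos : 0 < c := by rw [hc]; positivity
  set q0 : ℝ := max 1 (2 * c / x) with hq0
  have hq0pos : 0 < q0 := lt_of_lt_of_le one_pos (le_max_left _ _)
  have hq0ge : 2 * c / x ≤ q0 := le_max_right _ _
  have hPq0 : Phibar q0 < x := by
    have h1 : Phibar q0 ≤ gphi q0 / q0 := Phibar_le_gphi_div q0 hq0pos
    have h2 : gphi q0 ≤ c := by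
      unfold gphi
      rw [← hc]
      calc c * Real.exp (-(q0 ^ 2) / 2) ≤ c * 1 := by
            apply mul_le_mul_of_nonneg_left _ hcpos.le
            rw [Real.exp_le_one_iff]
            nlinarith [sq_nonneg q0]
        _ = c := mul_one c
    have h3 : gphi q0 / q0 ≤ c / q0 := by gcongr
    have h4 : c / q0 ≤ c / (2 * c / x) := by
      apply div_le_div_of_nonneg_left hcpos.le (by positivity) hq0ge
    have h5 : c / (2 * c / x) = x / 2 := by
      field_simp
    have : Phibar q0 ≤ x / 2 := by
      calc Phibar q0 ≤ gphi q0 / q0 := h1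
        _ ≤ c / q0 := h3
        _ ≤ c / (2 * c / x) := h4
        _ = x / 2 := h5
    linarith
  have hmem : x ∈ Set.Icc (Phibar q0) (Phibar 0) := by
    constructor
    · exact hPq0.le
    · rw [Phibar_zero]; linarith
  have := intermediate_value_Icc' hq0pos.le continuous_Phibar.continuousOn hmem
  obtain ⟨q, _, hq⟩ := this
  exact ⟨q, hq⟩

end GaussianQuantileAux

open GaussianQuantileAux in
theorem gaussian_quantile_log_bounds (x : ℝ) (hx0 : 0 < x) (hx : x < 1 / 2) :
    Real.log ((PhibarInv x) ^ 2 / ((PhibarInv x) ^ 2 + 1)) ≤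
      (PhibarInv x) ^ 2 / 2 - Real.log (1 / x) + Real.log (Real.sqrt (2 * Real.pi) * PhibarInv x) ∧
    (PhibarInv x) ^ 2 / 2 - Real.log (1 / x) + Real.log (Real.sqrt (2 * Real.pi) * PhibarInv x) ≤ 0 := by
  obtain ⟨q, hq⟩ := exists_Phibar_eq x hx0 hx
  set p : ℝ := PhibarInv x with hpdef
  have hPeq : Phibar p = x := by
    rw [hpdef]
    exact Function.invFun_eq ⟨q, hq⟩
  have hppos : 0 < p := by
    by_contra h
    push_neg at h
    have h1 : Phibar 0 ≤ Phibar p := Phibar_strictAnti.antitone h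
    rw [Phibar_zero, hPeq] at h1
    linarith
  have hden : (0:ℝ) < p ^ 2 + 1 := by positivity
  have hsq : (0:ℝ) < Real.sqrt (2 * Real.pi) := sqrt2pi_pos
  have hgp : (0:ℝ) < gphi p := gphi_pos p
  -- log identities
  have hlog_gphi : Real.log (gphi p) = -Real.log (Real.sqrt (2 * Real.pi)) + (-(p ^ 2) / 2) := by
    unfold gphi
    rw [Real.log_mul (by positivity) (Real.exp_ne_zero _), Real.log_inv, Real.log_exp]
  have hlog_inv : Real.log (1 / x) = -Real.log x := by
    rw [one_div, Real.log_inv]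
  have hlog_sp : Real.log (Real.sqrt (2 * Real.pi) * p)
      = Real.log (Real.sqrt (2 * Real.pi)) + Real.log p := Real.log_mul (ne_of_gt hsq) (ne_of_gt hppos)
  have hlog_frac : Real.log (p ^ 2 / (p ^ 2 + 1)) = 2 * Real.log p - Real.log (p ^ 2 + 1) := by
    rw [Real.log_div (by positivity) (ne_of_gt hden), Real.log_pow]
    push_cast
    ring
  constructor
  · -- lower bound
    have hbound : p / (p ^ 2 + 1) * gphi p ≤ x := hPeq ▸ gphi_mul_le_Phibar p
    have hposlhs : 0 < p / (p ^ 2 + 1) * gphi p := by positivity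
    have hlogle : Real.log (p / (p ^ 2 + 1) * gphi p) ≤ Real.log x :=
      Real.log_le_log hposlhs hbound
    have hval : Real.log (p / (p ^ 2 + 1) * gphi p)
        = Real.log p - Real.log (p ^ 2 + 1) + Real.log (gphi p) := by
      rw [Real.log_mul (ne_of_gt (by positivity)) (ne_of_gt hgp),
        Real.log_div (ne_of_gt hppos) (ne_of_gt hden)]
    rw [hval, hlog_gphi] at hlogle
    rw [hlog_frac, hlog_inv, hlog_sp]
    linarith
  · -- upper bound
    have hbound : x ≤ gphi p / p := hPeq ▸ Phibar_le_gphi_div p hppos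
    have hlogle : Real.log x ≤ Real.log (gphi p / p) := Real.log_le_log hx0 hbound
    have hval : Real.log (gphi p / p) = Real.log (gphi p) - Real.log p :=
      Real.log_div (ne_of_gt hgp) (ne_of_gt hppos)
    rw [hval, hlog_gphi] at hlogle
    rw [hlog_inv, hlog_sp]
    linarith
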